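/- Let k ≥ 2 be an even integer. A finite graph G contains a perfect k-matching if and only if for every subset S of V(G), the number of isolated vertices of G − S is at most |S|. -/

import Mathlib

/-- A perfect `k`-matching of a simple graph `G` is an assignment `f` of weights in
`{0, 1, ..., k}` to the edges of `G` (non-edges get weight `0`) such that for every vertex `v`,
the sum of the weights of the edges incident with `v` equals `k`. -/
def SimpleGraph.IsPerfectNMatching {V : Type*} (G : SimpleGraph V) (k : ℕ)
    (f : Sym2 V → ℕ) : Prop :=
  (∀ e, f e ≠ 0 → e ∈ G.edgeSet) ∧ (∀ e, f e ≤ k) ∧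
    ∀ v : V, ∑ᶠ e ∈ G.incidenceSet v, f e = k

/-- `i(G - S)`: the number of isolated vertices of the subgraph of `G` induced on the
complement of `S`, i.e. the number of vertices outside `S` all of whose neighbours lie in `S`. -/
noncomputable def SimpleGraph.isoCount {V : Type*} (G : SimpleGraph V) (S : Set V) : ℕ :=
  Nat.card {v : V // v ∉ S ∧ ∀ w, G.Adj v w → w ∈ S}

private lemma sum_biUnion_le_aux {ι α : Type*} [DecidableEq α] (s : Finset ι)
    (t : ι → Finset α) (f : α → ℕ) :
    ∑ e ∈ s.biUnion t, f e ≤ ∑ i ∈ s, ∑ e ∈ t i, f e := by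
  classical
  induction s using Finset.induction_on with
  | empty => simp
  | insert _ _ hx ih =>
    rename_i a s
    rw [Finset.biUnion_insert, Finset.sum_insert hx]
    have h1 : ∑ e ∈ t a ∪ s.biUnion t, f e ≤ (∑ e ∈ t a, f e) + ∑ e ∈ s.biUnion t, f e := by
      have := Finset.sum_union_inter (s₁ := t a) (s₂ := s.biUnion t) (f := f)
      omega
    exact h1.trans (by omega)

/-- Let `k ≥ 2` be an even integer. A finite graph `G` contains a perfect `k`-matching if and
only if for every subset `S` of `V(G)`, the number of isolated vertices of `G - S` is at most
`|S|`. -/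
theorem perfect_k_matching_iff_isoCount_le {V : Type*} [Fintype V]
    (G : SimpleGraph V) (k : ℕ) (hk : 2 ≤ k) (hke : Even k) :
    (∃ f, G.IsPerfectNMatching k f) ↔ ∀ S : Set V, G.isoCount S ≤ S.ncard := by
  classical
  have isoCount_eq : ∀ S : Set V, G.isoCount S =
      (Finset.univ.filter (fun v => v ∉ S ∧ ∀ w, G.Adj v w → w ∈ S)).card := by
    intro S
    rw [SimpleGraph.isoCount, Nat.card_eq_fintype_card, Fintype.card_subtype]
  constructor
  · rintro ⟨f, hf0, hfk, hfs⟩ S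
    set I : Finset V := Finset.univ.filter (fun v => v ∉ S ∧ ∀ w, G.Adj v w → w ∈ S) with hI
    set SF : Finset V := S.toFinset with hSF
    set incF : V → Finset (Sym2 V) := fun v => (G.incidenceSet v).toFinite.toFinset with hincF
    have hsum : ∀ v, ∑ e ∈ incF v, f e = k := by
      intro v
      rw [← finsum_mem_eq_finite_toFinset_sum f (G.incidenceSet v).toFinite]
      exact hfs v
    set T : V → Finset (Sym2 V) := fun v => (incF v).filter (fun e => f e ≠ 0) with hT
    have hTsum : ∀ v, ∑ e ∈ T v, f e = k := by
      intro v
      rw [hT]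
      simpa [Finset.sum_filter_ne_zero] using hsum v
    have hmem : ∀ v (e : Sym2 V), e ∈ T v → e ∈ G.incidenceSet v ∧ f e ≠ 0 := by
      intro v e he
      rw [hT, Finset.mem_filter] at he
      exact ⟨(Set.Finite.mem_toFinset _).mp he.1, he.2⟩
    -- isolated vertices are pairwise nonadjacent and their nonzero edges go into S
    have hdisj : (I : Set V).PairwiseDisjoint T := by
      intro v hv u hu hvu
      simp only [Function.onFun]
      simp only [Finset.coe_filter, Set.mem_setOf_eq, hI, Finset.mem_coe,
        Finset.mem_filter] at hv hu
      rw [Finset.disjoint_left]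
      intro e hev heu
      obtain ⟨hev1, hev2⟩ := hmem v e hev
      obtain ⟨heu1, _⟩ := hmem u e heu
      have hadj : G.Adj v u := G.adj_of_mem_incidenceSet hvu hev1 heu1
      exact hu.2.1 (hv.2.2 u hadj)
    have hsub : I.biUnion T ⊆ SF.biUnion T := by
      intro e he
      rw [Finset.mem_biUnion] at he ⊢
      obtain ⟨v, hvI, heT⟩ := he
      obtain ⟨he1, he2⟩ := hmem v e heT
      simp only [hI, Finset.mem_filter, Finset.mem_univ, true_and] at hvI
      -- find the other endpoint, which is in S
      induction e with
      | h x y =>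
        have hadj : G.Adj x y := G.mem_edgeSet.mp he1.1
        have hv : v = x ∨ v = y := Sym2.mem_iff.mp he1.2
        rcases hv with rfl | rfl
        · refine ⟨y, ?_, ?_⟩
          · rw [hSF, Set.mem_toFinset]; exact hvI.2 y hadj
          · rw [hT, Finset.mem_filter, Set.Finite.mem_toFinset]
            exact ⟨G.mk'_mem_incidenceSet_right_iff.mpr hadj, he2⟩
        · refine ⟨x, ?_, ?_⟩
          · rw [hSF, Set.mem_toFinset]; exact hvI.2 x hadj.symm
          · rw [hT, Finset.mem_filter, Set.Finite.mem_toFinset]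
            exact ⟨G.mk'_mem_incidenceSet_left_iff.mpr hadj, he2⟩
    have key : k * I.card ≤ k * SF.card := by
      calc k * I.card = ∑ v ∈ I, k := by rw [Finset.sum_const, smul_eq_mul, mul_comm]
        _ = ∑ v ∈ I, ∑ e ∈ T v, f e := by
            exact Finset.sum_congr rfl fun v _ => (hTsum v).symm
        _ = ∑ e ∈ I.biUnion T, f e := (Finset.sum_biUnion hdisj).symm
        _ ≤ ∑ e ∈ SF.biUnion T, f e := Finset.sum_le_sum_of_subset hsub
        _ ≤ ∑ w ∈ SF, ∑ e ∈ T w, f e := sum_biUnion_le_aux SF T f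
        _ = ∑ w ∈ SF, k := Finset.sum_congr rfl fun w _ => hTsum w
        _ = k * SF.card := by rw [Finset.sum_const, smul_eq_mul, mul_comm]
    have hIS : I.card ≤ SF.card := Nat.le_of_mul_le_mul_left key (by omega)
    rw [isoCount_eq S, ← hI]
    rwa [Set.ncard_eq_toFinset_card']
  · intro hS
    -- Hall's condition
    have hall : ∀ A : Finset V, A.card ≤ (A.biUnion (fun a => G.neighborFinset a)).card := by
      intro A
      set N : Finset V := A.biUnion (fun a => G.neighborFinset a) with hN
      have key : (A \ N).card ≤ (N \ A).card := by
        have h1 : (A \ N).card ≤ G.isoCount ↑(N \ A) := by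
          rw [isoCount_eq]
          apply Finset.card_le_card
          intro v hv
          rw [Finset.mem_sdiff] at hv
          simp only [Finset.mem_filter, Finset.mem_univ, true_and]
          refine ⟨?_, ?_⟩
          · intro hmem
            rw [Finset.mem_coe, Finset.mem_sdiff] at hmem
            exact hv.2 hmem.1
          · intro w hw
            rw [Finset.mem_coe, Finset.mem_sdiff]
            constructor
            · rw [hN, Finset.mem_biUnion]
              exact ⟨v, hv.1, (G.mem_neighborFinset v w).mpr hw⟩
            · intro hwA
              apply hv.2
              rw [hN, Finset.mem_biUnion]
              exact ⟨w, hwA, (G.mem_neighborFinset w v).mpr hw.symm⟩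
        have h2 := hS ↑(N \ A)
        rw [Set.ncard_coe_finset] at h2
        exact h1.trans h2
      have hA := Finset.card_inter_add_card_sdiff A N
      have hNc := Finset.card_inter_add_card_sdiff N A
      have hic : (A ∩ N).card = (N ∩ A).card := by rw [Finset.inter_comm]
      omega
    obtain ⟨g, hginj, hgmem⟩ :=
      (Finset.all_card_le_biUnion_card_iff_exists_injective (fun a => G.neighborFinset a)).mp hall
    have hgadj : ∀ v, G.Adj v (g v) := fun v => (G.mem_neighborFinset v (g v)).mp (hgmem v)
    obtain ⟨m, hm⟩ := hke
    have hm1 : 1 ≤ m := by omega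
    refine ⟨fun e => m * (Finset.univ.filter (fun v => s(v, g v) = e)).card, ?_, ?_, ?_⟩
    · intro e he
      have : (Finset.univ.filter (fun v => s(v, g v) = e)).Nonempty := by
        by_contra h
        rw [Finset.not_nonempty_iff_eq_empty] at h
        simp [h] at he
      obtain ⟨v, hv⟩ := this
      rw [Finset.mem_filter] at hv
      rw [← hv.2]
      exact G.mem_edgeSet.mpr (hgadj v)
    · intro e
      induction e with
      | h x y =>
        have hsub2 : Finset.univ.filter (fun v => s(v, g v) = s(x, y)) ⊆ {x, y} := by
          intro v hv
          rw [Finset.mem_filter] at hv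
          rw [Sym2.eq_iff] at hv
          rw [Finset.mem_insert, Finset.mem_singleton]
          rcases hv.2 with ⟨h1, _⟩ | ⟨h1, _⟩
          · exact Or.inl h1
          · exact Or.inr h1
        have := Finset.card_le_card hsub2
        have h2 : ({x, y} : Finset V).card ≤ 2 := Finset.card_insert_le _ _ |>.trans (by simp)
        calc m * (Finset.univ.filter (fun v => s(v, g v) = s(x, y))).card ≤ m * 2 :=
              Nat.mul_le_mul_left m (this.trans h2)
          _ = k := by omega
    · intro v
      rw [finsum_mem_eq_finite_toFinset_sum _ (G.incidenceSet v).toFinite]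
      set incF : Finset (Sym2 V) := (G.incidenceSet v).toFinite.toFinset with hincF
      rw [← Finset.mul_sum]
      -- fiberwise counting
      set P : Finset V := Finset.univ.filter (fun u => s(u, g u) ∈ incF) with hP
      have hfib : ∀ e ∈ incF, Finset.univ.filter (fun u => s(u, g u) = e) =
          P.filter (fun u => s(u, g u) = e) := by
        intro e he
        ext u
        simp only [Finset.mem_filter, Finset.mem_univ, true_and, hP]
        constructor
        · intro h
          refine ⟨?_, h⟩
          rw [h]; exact he
        · exact fun h => h.2
      have hcount : ∑ e ∈ incF, (Finset.univ.filter (fun u => s(u, g u) = e)).card = P.card := by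
        rw [Finset.sum_congr rfl fun e he => by rw [hfib e he]]
        exact (Finset.card_eq_sum_card_fiberwise (fun u hu => by
          rw [Finset.mem_coe, hP, Finset.mem_filter] at hu; exact Finset.mem_coe.mpr hu.2)).symm
      rw [hcount]
      -- P = {v, w} where g w = v
      obtain ⟨w, hw⟩ := Finite.surjective_of_injective hginj v
      have hvw : v ≠ w := hw ▸ (hgadj w).ne'
      have hPeq : P = {v, w} := by
        ext u
        simp only [hP, Finset.mem_filter, Finset.mem_univ, true_and, hincF,
          Set.Finite.mem_toFinset, Finset.mem_insert, Finset.mem_singleton]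
        constructor
        · intro hu
          rcases Sym2.mem_iff.mp hu.2 with h | h
          · exact Or.inl h.symm
          · exact Or.inr (hginj (hw.trans h)).symm
        · rintro (rfl | rfl)
          · exact ⟨G.mem_edgeSet.mpr (hgadj u), Sym2.mem_mk_left u (g u)⟩
          · refine ⟨G.mem_edgeSet.mpr (hgadj u), ?_⟩
            rw [hw]
            exact Sym2.mem_mk_right u v
      rw [hPeq, Finset.card_insert_of_notMem (by simpa using hvw), Finset.card_singleton]
      omega
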